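/- For every partition λ and non-negative integer k, the number of 1-asymmetric partitions ν with λ ≺ ν and |ν/λ| = k equals the number of 1-asymmetric partitions μ with μ ≺' λ and |λ/μ| = k. Equivalently, π_{P¹_asym} ∘ U_x = π_{P¹_asym} ∘ D*_x. -/

import Mathlib

/-- A partition, encoded as a weakly decreasing eventually-zero sequence of
natural numbers (`part i` is the `(i+1)`-st part). -/
structure Ptn where
  part : ℕ → ℕ
  anti : Antitone part
  fin : ∃ N, ∀ n, N ≤ n → part n = 0

namespace Ptn

/-- The number of cells of the skew diagram `lam / mu`. -/
noncomputable def skewSize (lam mu : Ptn) : ℕ := ∑ᶠ i, (lam.part i - mu.part i)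

/-- `HStrip mu lam` means `mu ≺ lam`, i.e. `mu ⊆ lam` and the skew diagram
`lam/mu` is a horizontal strip (at most one cell in each column). -/
def HStrip (mu lam : Ptn) : Prop :=
  (∀ i, mu.part i ≤ lam.part i) ∧ ∀ i, lam.part (i + 1) ≤ mu.part i

/-- `VStrip mu lam` means `mu ≺' lam`, i.e. `mu ⊆ lam` and the skew diagram
`lam/mu` is a vertical strip (at most one cell in each row). -/
def VStrip (mu lam : Ptn) : Prop :=
  (∀ i, mu.part i ≤ lam.part i) ∧ ∀ i, lam.part i ≤ mu.part i + 1

/-- The union `lam ∪ rho` of two Young diagrams. -/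
def union (a b : Ptn) : Ptn where
  part i := max (a.part i) (b.part i)
  anti := fun _ _ h => max_le_max (a.anti h) (b.anti h)
  fin := by
    obtain ⟨N, hN⟩ := a.fin
    obtain ⟨M, hM⟩ := b.fin
    exact ⟨max N M, fun n hn => by
      show max (a.part n) (b.part n) = 0
      rw [hN n (le_trans (le_max_left _ _) hn), hM n (le_trans (le_max_right _ _) hn)]
      rfl⟩

/-- The intersection `lam ∩ rho` of two Young diagrams. -/
def inter (a b : Ptn) : Ptn where
  part i := min (a.part i) (b.part i)
  anti := fun _ _ h => min_le_min (a.anti h) (b.anti h)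
  fin := by
    obtain ⟨N, hN⟩ := a.fin
    exact ⟨N, fun n hn => by
      show min (a.part n) (b.part n) = 0
      simp [hN n hn]⟩

/-- The empty partition. -/
def empty : Ptn := ⟨fun _ => 0, fun _ _ _ => le_refl 0, ⟨0, fun _ _ => rfl⟩⟩

/-- The conjugate partition: `(conj lam).part j` is the length of column `j`. -/
noncomputable def conj (lam : Ptn) : Ptn where
  part j := Set.ncard {i | j < lam.part i}
  anti := by
    intro j k h
    apply Set.ncard_le_ncard
    · intro i hi
      exact lt_of_le_of_lt h hi
    · obtain ⟨N, hN⟩ := lam.fin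
      apply Set.Finite.subset (Set.finite_Iio N)
      intro i hi
      by_contra hc
      have hNi : N ≤ i := not_lt.mp (fun h => hc (Set.mem_Iio.mpr h))
      rw [Set.mem_setOf_eq, hN i hNi] at hi
      exact Nat.not_lt_zero j hi
  fin := by
    refine ⟨lam.part 0, fun n hn => ?_⟩
    have h : {i | n < lam.part i} = (∅ : Set ℕ) := by
      ext i
      simp only [Set.mem_setOf_eq, Set.mem_empty_iff_false, iff_false, not_lt]
      exact le_trans (lam.anti (Nat.zero_le i)) hn
    show Set.ncard {i | n < lam.part i} = 0
    rw [h, Set.ncard_empty]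

end Ptn

namespace Ptn

/-- A partition is `1`-asymmetric if its Frobenius notation is
`(a₁,…,a_l | a₁+1,…,a_l+1)`, i.e. on the Durfee square each column exceeds the
corresponding row by one: `lam'_i = lam_i + 1`. -/
def Asym1 (lam : Ptn) : Prop := ∀ i, i < lam.part i → (conj lam).part i = lam.part i + 1

/-- A partition is `(-1)`-asymmetric if its Frobenius notation is
`(a₁+1,…,a_l+1 | a₁,…,a_l)`, i.e. on the Durfee square each row exceeds the
corresponding column by one: `lam_i = lam'_i + 1`. -/
def AsymNeg1 (lam : Ptn) : Prop := ∀ i, i < lam.part i → lam.part i = (conj lam).part i + 1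

end Ptn

namespace Asym1Proof

open Finset

/-- A downward-closed finset of naturals is an initial segment. -/
lemma initseg (S : Finset ℕ) (h : ∀ a b : ℕ, a ≤ b → b ∈ S → a ∈ S) :
    S = Finset.range S.card := by
  have hsub : S ⊆ Finset.range S.card := by
    intro x hx
    have h1 : Finset.range (x + 1) ⊆ S := by
      intro y hy
      exact h y x (Nat.lt_succ_iff.mp (Finset.mem_range.mp hy)) hx
    have := Finset.card_le_card h1
    simp only [Finset.card_range] at this
    exact Finset.mem_range.mpr this
  exact Finset.eq_of_subset_of_card_le hsub (by simp)

namespace PtnFacts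

open Ptn

lemma setOf_lt_part_eq_Iio (P : Ptn) (j : ℕ) :
    {i | j < P.part i} = Set.Iio ((conj P).part j) := by
  obtain ⟨N, hN⟩ := P.fin
  have hfin : {i | j < P.part i} ⊆ Set.Iio N := by
    intro i hi
    by_contra hc
    have : P.part i = 0 := hN i (not_lt.mp fun h => hc (Set.mem_Iio.mpr h))
    simp only [Set.mem_setOf_eq, this] at hi
    omega
  have hFin : {i | j < P.part i}.Finite := Set.Finite.subset (Set.finite_Iio N) hfin
  -- the set is downward closed
  have hdc : ∀ a b : ℕ, a ≤ b → b ∈ {i | j < P.part i} → a ∈ {i | j < P.part i} := by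
    intro a b hab hb
    exact lt_of_lt_of_le hb (P.anti hab)
  -- convert to a finset
  obtain ⟨S, hS⟩ : ∃ S : Finset ℕ, (S : Set ℕ) = {i | j < P.part i} :=
    ⟨hFin.toFinset, hFin.coe_toFinset⟩
  have hS' : S = Finset.range S.card := by
    apply initseg
    intro a b hab hb
    have : b ∈ (S : Set ℕ) := hb
    rw [hS] at this
    have := hdc a b hab this
    rw [← hS] at this
    exact this
  have hcard : (conj P).part j = S.card := by
    show Set.ncard {i | j < P.part i} = S.card
    rw [← hS, Set.ncard_coe_finset]
  rw [← hS, hS', hcard]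
  ext x
  simp [Finset.mem_range, Set.mem_Iio]

lemma lt_conj_iff (P : Ptn) {i j : ℕ} : i < (conj P).part j ↔ j < P.part i := by
  constructor
  · intro h
    have : i ∈ Set.Iio ((conj P).part j) := h
    rw [← setOf_lt_part_eq_Iio] at this
    exact this
  · intro h
    have : i ∈ {i | j < P.part i} := h
    rw [setOf_lt_part_eq_Iio] at this
    exact this

lemma conj_conj_part (P : Ptn) (i : ℕ) : (conj (conj P)).part i = P.part i := by
  have h1 : {j | i < (conj P).part j} = Set.Iio (P.part i) := by
    ext j
    simp only [Set.mem_setOf_eq, Set.mem_Iio]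
    exact lt_conj_iff P
  show Set.ncard {j | i < (conj P).part j} = P.part i
  rw [h1]
  have : (Set.Iio (P.part i)) = ↑(Finset.range (P.part i)) := by
    ext x; simp
  rw [this, Set.ncard_coe_finset, Finset.card_range]

lemma conj_mono {P Q : Ptn} (h : ∀ i, P.part i ≤ Q.part i) (j : ℕ) :
    (conj P).part j ≤ (conj Q).part j := by
  by_contra hc
  push_neg at hc
  have h1 : (conj Q).part j < (conj P).part j := hc
  have h2 : j < P.part ((conj Q).part j) := (lt_conj_iff P).mp h1
  have h3 : j < Q.part ((conj Q).part j) := lt_of_lt_of_le h2 (h _)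
  have h4 : (conj Q).part j < (conj Q).part j := (lt_conj_iff Q).mpr h3
  omega

lemma ptn_ext {P Q : Ptn} (h : P.part = Q.part) : P = Q := by
  cases P; cases Q
  simp only [Ptn.mk.injEq]
  exact h

end PtnFacts
end Asym1Proof
namespace Asym1Proof
open Finset Ptn PtnFacts

/-! ### Durfee square -/

lemma exists_le (P : Ptn) : ∃ n, P.part n ≤ n := by
  obtain ⟨N, hN⟩ := P.fin
  exact ⟨N, by simp [hN N le_rfl]⟩

/-- Durfee size of a partition. -/
noncomputable def dd (P : Ptn) : ℕ := Nat.find (exists_le P)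

lemma part_le_of_dd_le (P : Ptn) {i : ℕ} (h : dd P ≤ i) : P.part i ≤ i :=
  le_trans (P.anti h) (le_trans (Nat.find_spec (exists_le P)) h)

lemma lt_dd_iff (P : Ptn) {i : ℕ} : i < dd P ↔ i < P.part i := by
  constructor
  · intro h
    have := Nat.find_min (exists_le P) h
    omega
  · intro h
    by_contra hc
    have := part_le_of_dd_le P (not_lt.mp hc)
    omega

lemma dd_le_part (P : Ptn) {i : ℕ} (h : i < dd P) : dd P ≤ P.part i := by
  have h1 : dd P - 1 < dd P := by omega
  have h2 : dd P - 1 < P.part (dd P - 1) := (lt_dd_iff P).mp h1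
  have h3 : P.part (dd P - 1) ≤ P.part i := P.anti (by omega)
  omega

lemma lt_dd_iff_conj (P : Ptn) {i : ℕ} : i < dd P ↔ i < (conj P).part i := by
  rw [lt_dd_iff, ← lt_conj_iff P]

lemma dd_le_conj_part (P : Ptn) {i : ℕ} (h : i < dd P) : dd P ≤ (conj P).part i := by
  by_contra hc
  push_neg at hc
  -- (conj P).part i < dd P ; but dd P - 1 < P.part (dd P -1) so (dd P - 1) < conj at i?
  have h2 : i < dd P := h
  have h3 : dd P - 1 < P.part (dd P - 1) := (lt_dd_iff P).mp (by omega)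
  have h4 : P.part (dd P - 1) ≤ P.part i := P.anti (by omega)
  have h5 : i < P.part (dd P - 1) := by omega
  have h6 : dd P - 1 < (conj P).part i := (lt_conj_iff P).mpr h5
  omega

lemma conj_part_le_of_dd_le (P : Ptn) {i : ℕ} (h : dd P ≤ i) : (conj P).part i ≤ i := by
  by_contra hc
  push_neg at hc
  have := (lt_conj_iff P).mp hc
  have := part_le_of_dd_le P h
  omega

/-! ### counting subsets -/

lemma nat_card_coe {α : Type*} (s : Finset α) : Nat.card {x // x ∈ s} = s.card := by
  rw [Nat.card_eq_fintype_card, Fintype.card_coe]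

lemma count_between (A C : Finset ℕ) (hAC : A ⊆ C) (m : ℕ) :
    Nat.card {S : Finset ℕ // A ⊆ S ∧ S ⊆ C ∧ S.card = m} =
      if A.card ≤ m then (C.card - A.card).choose (m - A.card) else 0 := by
  by_cases hm : A.card ≤ m
  · rw [if_pos hm]
    have mem1 : ∀ (S : {S : Finset ℕ // A ⊆ S ∧ S ⊆ C ∧ S.card = m}),
        S.1 \ A ∈ Finset.powersetCard (m - A.card) (C \ A) := by
      rintro ⟨S, h1, h2, h3⟩
      rw [Finset.mem_powersetCard]
      exact ⟨Finset.sdiff_subset_sdiff h2 le_rfl, by rw [Finset.card_sdiff_of_subset h1, h3]⟩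
    have mem2 : ∀ (T : {T // T ∈ Finset.powersetCard (m - A.card) (C \ A)}),
        A ⊆ T.1 ∪ A ∧ T.1 ∪ A ⊆ C ∧ (T.1 ∪ A).card = m := by
      rintro ⟨T, hT⟩
      rw [Finset.mem_powersetCard] at hT
      obtain ⟨hT1, hT2⟩ := hT
      have hTC : T ⊆ C := hT1.trans (Finset.sdiff_subset)
      have hdisj : Disjoint T A := by
        rw [Finset.disjoint_left]
        intro x hx1 hx2
        have := hT1 hx1
        rw [Finset.mem_sdiff] at this
        exact this.2 hx2
      refine ⟨Finset.subset_union_right, Finset.union_subset hTC hAC, ?_⟩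
      rw [Finset.card_union_of_disjoint hdisj, hT2]
      omega
    have e : {S : Finset ℕ // A ⊆ S ∧ S ⊆ C ∧ S.card = m} ≃
        {T // T ∈ Finset.powersetCard (m - A.card) (C \ A)} :=
      { toFun := fun S => ⟨S.1 \ A, mem1 S⟩
        invFun := fun T => ⟨T.1 ∪ A, mem2 T⟩
        left_inv := by
          rintro ⟨S, h1, h2, h3⟩
          apply Subtype.ext
          exact Finset.sdiff_union_of_subset h1
        right_inv := by
          rintro ⟨T, hT⟩
          apply Subtype.ext
          rw [Finset.mem_powersetCard] at hT
          show (T ∪ A) \ A = T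
          rw [Finset.union_sdiff_right]
          apply Finset.sdiff_eq_self_of_disjoint
          rw [Finset.disjoint_left]
          intro x hx1 hx2
          have := hT.1 hx1
          rw [Finset.mem_sdiff] at this
          exact this.2 hx2 }
    rw [Nat.card_congr e, nat_card_coe, Finset.card_powersetCard, Finset.card_sdiff_of_subset hAC]
  · rw [if_neg hm]
    rw [Nat.card_eq_zero]
    left
    constructor
    rintro ⟨S, h1, h2, h3⟩
    have := Finset.card_le_card h1
    omega

/-! ### sums of parts -/

lemma sum_part_formula (p g f : ℕ → ℕ) (d N : ℕ)
    (hp1 : ∀ i < d, p i = g i)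
    (hp2 : ∀ i, d ≤ i → p i = ((Finset.range d).filter (fun j => i < f j)).card)
    (hfd : ∀ j < d, d ≤ f j) (hfN : ∀ j < d, f j ≤ N) (hdN : d ≤ N) :
    ∑ i ∈ Finset.range N, p i = ∑ j ∈ Finset.range d, (g j + (f j - d)) := by
  rw [Finset.range_eq_Ico, ← Finset.sum_Ico_consecutive _ (Nat.zero_le d) hdN]
  have h1 : ∑ i ∈ Finset.Ico 0 d, p i = ∑ j ∈ Finset.range d, g j := by
    rw [← Finset.range_eq_Ico]
    exact Finset.sum_congr rfl (fun i hi => hp1 i (Finset.mem_range.mp hi))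
  have h2 : ∑ i ∈ Finset.Ico d N, p i = ∑ j ∈ Finset.range d, (f j - d) := by
    have : ∀ i ∈ Finset.Ico d N, p i = ∑ j ∈ Finset.range d, if i < f j then 1 else 0 := by
      intro i hi
      rw [hp2 i (Finset.mem_Ico.mp hi).1]
      exact Finset.card_filter _ _
    rw [Finset.sum_congr rfl this, Finset.sum_comm]
    apply Finset.sum_congr rfl
    intro j hj
    have hj' := Finset.mem_range.mp hj
    have : ∑ i ∈ Finset.Ico d N, (if i < f j then 1 else 0) =
        ((Finset.Ico d N).filter (fun i => i < f j)).card := by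
      rw [Finset.card_filter]
    rw [this, Finset.Ico_filter_lt, min_eq_right (hfN j hj'), Nat.card_Ico]
  rw [h1, h2, ← Finset.sum_add_distrib]

end Asym1Proof
namespace Asym1Proof
open Finset Ptn PtnFacts

section OfRows

variable (d : ℕ) (ρ : ℕ → ℕ)

/-- Monotone-on-an-initial-segment helper. -/
lemma rho_mono (H1 : ∀ i, i + 1 < d → ρ (i+1) ≤ ρ i) :
    ∀ a b, a ≤ b → b < d → ρ b ≤ ρ a := by
  intro a b hab hbd
  induction b with
  | zero =>
    have : a = 0 := by omega
    rw [this]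
  | succ n ih =>
    rcases Nat.eq_or_lt_of_le hab with h | h
    · rw [h]
    · exact le_trans (H1 n hbd) (ih (by omega) (by omega))

lemma filter_initial (f : ℕ → ℕ) (hf : ∀ a b, a ≤ b → b < d → f b ≤ f a) (i : ℕ) :
    ∀ j, j < ((Finset.range d).filter (fun t => i < f t)).card ↔ (j < d ∧ i < f j) := by
  intro j
  have hS : (Finset.range d).filter (fun t => i < f t) =
      Finset.range ((Finset.range d).filter (fun t => i < f t)).card := by
    apply initseg
    intro a b hab hb
    rw [Finset.mem_filter, Finset.mem_range] at hb ⊢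
    exact ⟨by omega, lt_of_lt_of_le hb.2 (hf a b hab hb.1)⟩
  constructor
  · intro h
    have : j ∈ Finset.range _ := Finset.mem_range.mpr h
    rw [← hS, Finset.mem_filter, Finset.mem_range] at this
    exact this
  · intro h
    have : j ∈ (Finset.range d).filter (fun t => i < f t) := by
      rw [Finset.mem_filter, Finset.mem_range]; exact h
    rw [hS, Finset.mem_range] at this
    exact this

variable (H1 : ∀ i, i + 1 < d → ρ (i+1) ≤ ρ i) (H2 : ∀ i, i < d → d - 1 ≤ ρ i)

/-- The `1`-asymmetric partition with given diagonal rows `ρ 0 > ... > ρ (d-1)`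
(as arms `ρ i - i - 1`). -/
noncomputable def ofRows : Ptn where
  part i := if i < d then ρ i else ((Finset.range d).filter (fun j => i < ρ j + 1)).card
  anti := by
    intro i j hij
    dsimp only
    by_cases hjd : j < d
    · rw [if_pos hjd, if_pos (lt_of_le_of_lt hij hjd)]
      exact rho_mono d ρ H1 i j hij hjd
    · rw [if_neg hjd]
      by_cases hid : i < d
      · rw [if_pos hid]
        by_cases hr : d ≤ ρ i
        · exact le_trans (le_trans (Finset.card_filter_le _ _) (by rw [Finset.card_range])) hr
        · -- ρ i = d - 1, the filter avoids i
          have hri : ρ i = d - 1 := by have := H2 i hid; omega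
          have hsub : (Finset.range d).filter (fun t => j < ρ t + 1) ⊆
              (Finset.range d).erase i := by
            intro t ht
            rw [Finset.mem_filter, Finset.mem_range] at ht
            rw [Finset.mem_erase, Finset.mem_range]
            refine ⟨?_, ht.1⟩
            intro he
            subst he
            omega
          have := Finset.card_le_card hsub
          rw [Finset.card_erase_of_mem (Finset.mem_range.mpr hid), Finset.card_range] at this
          omega
      · rw [if_neg hid]
        apply Finset.card_le_card
        intro t ht
        rw [Finset.mem_filter] at ht ⊢
        exact ⟨ht.1, by omega⟩
  fin := by
    refine ⟨d + ρ 0 + 1, fun n hn => ?_⟩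
    have hnd : ¬ n < d := by omega
    rw [if_neg hnd]
    convert Finset.card_empty
    rw [Finset.filter_eq_empty_iff]
    intro t ht
    rw [Finset.mem_range] at ht
    have : ρ t ≤ ρ 0 := rho_mono d ρ H1 0 t (Nat.zero_le t) ht
    omega

lemma ofRows_part_lt {i : ℕ} (hi : i < d) : (ofRows d ρ H1 H2).part i = ρ i := by
  show (if i < d then ρ i else _) = ρ i
  rw [if_pos hi]

lemma ofRows_part_ge {i : ℕ} (hi : d ≤ i) :
    (ofRows d ρ H1 H2).part i = ((Finset.range d).filter (fun j => i < ρ j + 1)).card := by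
  show (if i < d then ρ i else _) = _
  rw [if_neg (by omega : ¬ i < d)]

lemma ofRows_part_ge_iff {i : ℕ} (hi : d ≤ i) (j : ℕ) :
    j < (ofRows d ρ H1 H2).part i ↔ (j < d ∧ i < ρ j + 1) := by
  rw [ofRows_part_ge d ρ H1 H2 hi]
  exact filter_initial d (fun t => ρ t + 1)
    (fun a b hab hbd => by
      have := rho_mono d ρ H1 a b hab hbd
      show ρ b + 1 ≤ ρ a + 1
      omega) i j

lemma ofRows_part_ge_le {i : ℕ} (hi : d ≤ i) : (ofRows d ρ H1 H2).part i ≤ d := by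
  rw [ofRows_part_ge d ρ H1 H2 hi]
  exact le_trans (Finset.card_filter_le _ _) (by rw [Finset.card_range])

lemma conj_ofRows {j : ℕ} (hj : j < d) (hjr : j < ρ j) :
    (conj (ofRows d ρ H1 H2)).part j = ρ j + 1 := by
  have hset : {i | j < (ofRows d ρ H1 H2).part i} = ↑(Finset.range (ρ j + 1)) := by
    ext i
    simp only [Set.mem_setOf_eq, Finset.coe_range, Set.mem_Iio]
    by_cases hid : i < d
    · rw [ofRows_part_lt d ρ H1 H2 hid]
      constructor
      · intro _
        have := H2 j hj
        omega
      · intro _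
        -- show j < ρ i for every i < d
        by_cases hij : i ≤ j
        · have := rho_mono d ρ H1 i j hij hj
          omega
        · -- j < i < d, so j < d - 1, and ρ i ≥ d - 1 > j
          have := H2 i hid
          omega
    · rw [ofRows_part_ge_iff d ρ H1 H2 (by omega)]
      constructor
      · intro h; omega
      · intro h
        exact ⟨hj, by omega⟩
  show Set.ncard _ = _
  rw [hset, Set.ncard_coe_finset, Finset.card_range]

lemma asym1_ofRows : Asym1 (ofRows d ρ H1 H2) := by
  intro i hi
  by_cases hid : i < d
  · rw [ofRows_part_lt d ρ H1 H2 hid] at hi ⊢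
    exact conj_ofRows d ρ H1 H2 hid hi
  · exfalso
    have := ofRows_part_ge_le d ρ H1 H2 (by omega : d ≤ i)
    omega

end OfRows
end Asym1Proof
namespace Asym1Proof
open Finset Ptn PtnFacts

section Mid

variable (lam : Ptn) (k : ℕ)

/-- Sum of `(row + 1)` over the Durfee diagonal. -/
noncomputable def AA : ℕ := ∑ j ∈ Finset.range (dd lam), (lam.part j + 1)

/-- Sum of column lengths over the Durfee diagonal. -/
noncomputable def BB : ℕ := ∑ j ∈ Finset.range (dd lam), (conj lam).part j

/-- Feasibility of `lam` (otherwise both sides of the theorem are empty). -/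
def Feas : Prop :=
  (∀ i, i < dd lam → lam.part i ≤ (conj lam).part i) ∧
  (∀ i, i + 1 < dd lam → (conj lam).part (i + 1) ≤ lam.part i + 1)

/-- Forced diagonal positions. -/
noncomputable def F1 : Finset ℕ :=
  (Finset.range (dd lam)).filter (fun i => lam.part i = (conj lam).part i)

/-- Index data for `1`-asymmetric `ν ⊇ lam` with `ν/lam` a horizontal strip. -/
def condL (S : Finset ℕ) : Prop :=
  Feas lam ∧ S ⊆ Finset.range (dd lam) ∧ F1 lam ⊆ S ∧
    (∀ i ∈ S, ¬(1 ≤ i ∧ (conj lam).part i = lam.part (i - 1) + 1)) ∧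
    2 * S.card + BB lam = k + AA lam

/-- Index data for `1`-asymmetric `μ ⊆ lam` with `lam/μ` a vertical strip. -/
def condR (S : Finset ℕ) : Prop :=
  Feas lam ∧ S ⊆ Finset.range (dd lam) ∧ F1 lam ⊆ S ∧
    (∀ i ∈ S, ¬((conj lam).part (i + 1) = lam.part i + 1)) ∧
    2 * S.card + BB lam = k + AA lam

lemma mid_card_eq :
    Nat.card {S : Finset ℕ // condL lam k S} = Nat.card {S : Finset ℕ // condR lam k S} := by
  classical
  by_cases hF : Feas lam
  · set d := dd lam with hd
    set l := lam.part
    set l' := (conj lam).part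
    set ZLf : Finset ℕ :=
      (Finset.range d).filter (fun i => 1 ≤ i ∧ l' i = l (i - 1) + 1) with hZL
    set ZRf : Finset ℕ :=
      (Finset.range d).filter (fun i => l' (i + 1) = l i + 1) with hZR
    set CL : Finset ℕ := Finset.range d \ ZLf with hCL
    set CR : Finset ℕ := Finset.range d \ ZRf with hCR
    have hZcard : ZLf.card = ZRf.card := by
      apply Finset.card_bij' (fun i _ => i - 1) (fun j _ => j + 1)
      · intro i hi
        first
        | omega
        | (simp only [hZL, Finset.mem_filter, Finset.mem_range] at hi; omega)
      · intro j hj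
        first
        | omega
        | (simp only [hZR, Finset.mem_filter, Finset.mem_range] at hj; omega)
      · intro i hi
        first
        | (rw [hZL, Finset.mem_filter, Finset.mem_range] at hi)
        | skip
        rw [hZR, Finset.mem_filter, Finset.mem_range]
        obtain ⟨h1, h2, h3⟩ := hi
        constructor
        · omega
        · rw [Nat.sub_add_cancel h2]
          exact h3
      · intro j hj
        first
        | (rw [hZR, Finset.mem_filter, Finset.mem_range] at hj)
        | skip
        rw [hZL, Finset.mem_filter, Finset.mem_range]
        obtain ⟨h1, h2⟩ := hj
        have hld : d ≤ l j := dd_le_part lam h1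
        have hgt : d < l' (j + 1) := by omega
        have h4 : j + 1 < lam.part d := (lt_conj_iff lam).mp hgt
        have h5 : lam.part d ≤ d := part_le_of_dd_le lam le_rfl
        have hjd : j + 1 < d := by omega
        refine ⟨hjd, by omega, ?_⟩
        simpa using h2
    have hCcard : CL.card = CR.card := by
      rw [hCL, hCR, Finset.card_sdiff_of_subset (Finset.filter_subset _ _),
        Finset.card_sdiff_of_subset (Finset.filter_subset _ _), hZcard]
    have hF1CL : F1 lam ⊆ CL := by
      intro i hi
      rw [F1, Finset.mem_filter] at hi
      rw [hCL, Finset.mem_sdiff]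
      refine ⟨hi.1, ?_⟩
      intro hc
      rw [hZL, Finset.mem_filter] at hc
      obtain ⟨_, h2, h3⟩ := hc
      have h4 : l i ≤ l (i - 1) := lam.anti (by omega)
      have h5 : l i = l' i := hi.2
      omega
    have hF1CR : F1 lam ⊆ CR := by
      intro i hi
      rw [F1, Finset.mem_filter] at hi
      rw [hCR, Finset.mem_sdiff]
      refine ⟨hi.1, ?_⟩
      intro hc
      rw [hZR, Finset.mem_filter] at hc
      obtain ⟨_, h3⟩ := hc
      have h4 : l' (i + 1) ≤ l' i := (conj lam).anti (by omega)
      have h5 : l i = l' i := hi.2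
      omega
    have eL : ∀ S : Finset ℕ, condL lam k S ↔
        (F1 lam ⊆ S ∧ S ⊆ CL ∧ 2 * S.card + BB lam = k + AA lam) := by
      intro S
      rw [condL]
      constructor
      · rintro ⟨_, h2, h3, h4, h5⟩
        refine ⟨h3, ?_, h5⟩
        intro x hx
        rw [hCL, Finset.mem_sdiff, hZL, Finset.mem_filter]
        exact ⟨h2 hx, fun hc => (h4 x hx) hc.2⟩
      · rintro ⟨h3, h2, h5⟩
        refine ⟨hF, fun x hx => (Finset.mem_sdiff.mp (h2 hx)).1, h3, ?_, h5⟩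
        intro x hx hc
        have := Finset.mem_sdiff.mp (h2 hx)
        rw [hZL, Finset.mem_filter] at this
        exact this.2 ⟨this.1, hc⟩
    have eR : ∀ S : Finset ℕ, condR lam k S ↔
        (F1 lam ⊆ S ∧ S ⊆ CR ∧ 2 * S.card + BB lam = k + AA lam) := by
      intro S
      rw [condR]
      constructor
      · rintro ⟨_, h2, h3, h4, h5⟩
        refine ⟨h3, ?_, h5⟩
        intro x hx
        rw [hCR, Finset.mem_sdiff, hZR, Finset.mem_filter]
        exact ⟨h2 hx, fun hc => (h4 x hx) hc.2⟩
      · rintro ⟨h3, h2, h5⟩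
        refine ⟨hF, fun x hx => (Finset.mem_sdiff.mp (h2 hx)).1, h3, ?_, h5⟩
        intro x hx hc
        have := Finset.mem_sdiff.mp (h2 hx)
        rw [hZR, Finset.mem_filter] at this
        exact this.2 ⟨this.1, hc⟩
    rw [Nat.card_congr (Equiv.subtypeEquivRight eL), Nat.card_congr (Equiv.subtypeEquivRight eR)]
    by_cases hex : ∃ m, 2 * m + BB lam = k + AA lam
    · obtain ⟨m, hm⟩ := hex
      have hiffL : ∀ S : Finset ℕ,
          (F1 lam ⊆ S ∧ S ⊆ CL ∧ 2 * S.card + BB lam = k + AA lam) ↔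
          (F1 lam ⊆ S ∧ S ⊆ CL ∧ S.card = m) := by
        intro S
        constructor
        · rintro ⟨a, b, c⟩; exact ⟨a, b, by omega⟩
        · rintro ⟨a, b, c⟩; exact ⟨a, b, by omega⟩
      have hiffR : ∀ S : Finset ℕ,
          (F1 lam ⊆ S ∧ S ⊆ CR ∧ 2 * S.card + BB lam = k + AA lam) ↔
          (F1 lam ⊆ S ∧ S ⊆ CR ∧ S.card = m) := by
        intro S
        constructor
        · rintro ⟨a, b, c⟩; exact ⟨a, b, by omega⟩
        · rintro ⟨a, b, c⟩; exact ⟨a, b, by omega⟩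
      rw [Nat.card_congr (Equiv.subtypeEquivRight hiffL),
        Nat.card_congr (Equiv.subtypeEquivRight hiffR),
        count_between _ _ hF1CL, count_between _ _ hF1CR, hCcard]
    · have h0L : IsEmpty {S : Finset ℕ //
          F1 lam ⊆ S ∧ S ⊆ CL ∧ 2 * S.card + BB lam = k + AA lam} :=
        ⟨fun ⟨S, _, _, h⟩ => hex ⟨S.card, h⟩⟩
      have h0R : IsEmpty {S : Finset ℕ //
          F1 lam ⊆ S ∧ S ⊆ CR ∧ 2 * S.card + BB lam = k + AA lam} :=
        ⟨fun ⟨S, _, _, h⟩ => hex ⟨S.card, h⟩⟩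
      rw [Nat.card_of_isEmpty, Nat.card_of_isEmpty]
  · have h0L : IsEmpty {S : Finset ℕ // condL lam k S} := ⟨fun ⟨S, h, _⟩ => hF h⟩
    have h0R : IsEmpty {S : Finset ℕ // condR lam k S} := ⟨fun ⟨S, h, _⟩ => hF h⟩
    rw [Nat.card_of_isEmpty, Nat.card_of_isEmpty]

end Mid
end Asym1Proof
namespace Asym1Proof
open Finset Ptn PtnFacts

/-! ### skew size as difference of finite sums -/

lemma skewSize_eq (P Q : Ptn) (hle : ∀ i, Q.part i ≤ P.part i) (N : ℕ)
    (hN : ∀ i, N ≤ i → P.part i = 0) :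
    skewSize P Q = ∑ i ∈ Finset.range N, P.part i - ∑ i ∈ Finset.range N, Q.part i := by
  have hsupp : Function.support (fun i => P.part i - Q.part i) ⊆ ↑(Finset.range N) := by
    intro i hi
    simp only [Function.mem_support] at hi
    simp only [Finset.coe_range, Set.mem_Iio]
    by_contra hc
    have := hN i (by omega)
    omega
  show ∑ᶠ i, (P.part i - Q.part i) = _
  rw [finsum_eq_finset_sum_of_support_subset _ hsupp]
  exact Finset.sum_tsub_distrib _ (fun x _ => hle x)

section PerLam

variable (lam : Ptn)

lemma conj_part_pos {i : ℕ} (hi : i < dd lam) : 1 ≤ (conj lam).part i := by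
  have := dd_le_conj_part lam hi
  omega

/-- Rows of `lam` below the Durfee square, as counts of long columns. -/
lemma lam_row_count {i : ℕ} (hi : dd lam ≤ i) :
    lam.part i = ((Finset.range (dd lam)).filter (fun j => i < (conj lam).part j)).card := by
  have h1 : {j | i < (conj lam).part j} =
      ↑((Finset.range (dd lam)).filter (fun j => i < (conj lam).part j)) := by
    ext j
    simp only [Set.mem_setOf_eq, Finset.coe_filter, Finset.mem_range]
    constructor
    · intro h
      refine ⟨?_, h⟩
      -- j < dd lam since the column is longer than dd lam
      by_contra hc
      have hj : dd lam ≤ j := by omega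
      have h2 : dd lam < (conj lam).part j := by omega
      have h3 : j < lam.part (dd lam) := (lt_conj_iff lam).mp h2
      have h4 : lam.part (dd lam) ≤ dd lam := part_le_of_dd_le lam le_rfl
      omega
    · exact fun h => h.2
  calc lam.part i = (conj (conj lam)).part i := (conj_conj_part lam i).symm
    _ = _ := by
      show Set.ncard _ = _
      rw [h1, Set.ncard_coe_finset]

/-- `chiF S i` is `1` if `i ∈ S` and `0` otherwise. -/
noncomputable def chiF (S : Finset ℕ) (i : ℕ) : ℕ := if i ∈ S then 1 else 0

lemma chiF_le_one (S : Finset ℕ) (i : ℕ) : chiF S i ≤ 1 := by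
  rw [chiF]; split <;> omega

lemma card_eq_sum_chiF (S : Finset ℕ) (hS : S ⊆ Finset.range (dd lam)) :
    S.card = ∑ j ∈ Finset.range (dd lam), chiF S j := by
  have h1 : S = (Finset.range (dd lam)).filter (fun j => j ∈ S) := by
    ext x
    simp only [Finset.mem_filter]
    exact ⟨fun hx => ⟨hS hx, hx⟩, fun hx => hx.2⟩
  conv_lhs => rw [h1]
  rw [Finset.card_filter]
  simp only [chiF]

/-- membership conditions of `condL` without the size condition -/
def memL (S : Finset ℕ) : Prop :=
  Feas lam ∧ S ⊆ Finset.range (dd lam) ∧ F1 lam ⊆ S ∧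
    (∀ i ∈ S, ¬(1 ≤ i ∧ (conj lam).part i = lam.part (i - 1) + 1))

/-- membership conditions of `condR` without the size condition -/
def memR (S : Finset ℕ) : Prop :=
  Feas lam ∧ S ⊆ Finset.range (dd lam) ∧ F1 lam ⊆ S ∧
    (∀ i ∈ S, ¬((conj lam).part (i + 1) = lam.part i + 1))

lemma condL_iff (k : ℕ) (S : Finset ℕ) :
    condL lam k S ↔ memL lam S ∧ 2 * S.card + BB lam = k + AA lam := by
  rw [condL, memL]
  tauto

lemma condR_iff (k : ℕ) (S : Finset ℕ) :
    condR lam k S ↔ memR lam S ∧ 2 * S.card + BB lam = k + AA lam := by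
  rw [condR, memR]
  tauto

/-- diagonal rows of the candidate `ν` -/
noncomputable def rhoL (S : Finset ℕ) (i : ℕ) : ℕ := (conj lam).part i - 1 + chiF S i

lemma chiF_of_F1 {S : Finset ℕ} (h : memL lam S ∨ memR lam S) {i : ℕ} (hi : i < dd lam)
    (heq : lam.part i = (conj lam).part i) : chiF S i = 1 := by
  have hF1 : F1 lam ⊆ S := by rcases h with h | h; exact h.2.2.1; exact h.2.2.1
  have : i ∈ F1 lam := by
    rw [F1, Finset.mem_filter, Finset.mem_range]
    exact ⟨hi, heq⟩
  rw [chiF, if_pos (hF1 this)]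

lemma H1L {S : Finset ℕ} (h : memL lam S) :
    ∀ i, i + 1 < dd lam → rhoL lam S (i + 1) ≤ rhoL lam S i := by
  intro i hi
  obtain ⟨⟨hf1, hf2⟩, hsub, hF1, hZL⟩ := h
  have hco : (conj lam).part (i + 1) ≤ (conj lam).part i := (conj lam).anti (by omega)
  have hfeas2 : (conj lam).part (i + 1) ≤ lam.part i + 1 := hf2 i hi
  have hfeas1 : lam.part i ≤ (conj lam).part i := hf1 i (by omega)
  have hpos : 1 ≤ (conj lam).part i := conj_part_pos lam (by omega)
  rw [rhoL, rhoL]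
  by_cases hc : i + 1 ∈ S
  · -- raised coordinate: need strictness from the Z_L condition
    have hz := hZL (i + 1) hc
    have hne : (conj lam).part (i + 1) ≠ lam.part i + 1 := by
      intro hcc
      exact hz ⟨by omega, by simpa using hcc⟩
    have h2 : (conj lam).part (i + 1) ≤ lam.part i := by omega
    have hpos2 : 1 ≤ (conj lam).part (i + 1) := conj_part_pos lam (by omega)
    by_cases hc0 : i ∈ S
    · rw [chiF, if_pos hc, chiF, if_pos hc0]
      omega
    · -- i ∉ S hence i ∉ F1 hence lam.part i < l' i
      have hne1 : lam.part i ≠ (conj lam).part i := by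
        intro hcc
        exact hc0 (hF1 (by rw [F1, Finset.mem_filter, Finset.mem_range]; exact ⟨by omega, hcc⟩))
      rw [chiF, if_pos hc, chiF, if_neg hc0]
      omega
  · rw [chiF, if_neg hc]
    have := chiF_le_one S i
    omega

lemma H2L {S : Finset ℕ} (h : memL lam S) :
    ∀ i, i < dd lam → dd lam - 1 ≤ rhoL lam S i := by
  intro i hi
  have := dd_le_conj_part lam hi
  rw [rhoL]
  have := chiF_le_one S i
  omega

/-- The candidate partition `ν ⊇ lam`. -/
noncomputable def nuOf (S : Finset ℕ) (h : memL lam S) : Ptn :=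
  ofRows (dd lam) (rhoL lam S) (H1L lam h) (H2L lam h)

lemma nuOf_part_lt {S : Finset ℕ} (h : memL lam S) {i : ℕ} (hi : i < dd lam) :
    (nuOf lam S h).part i = (conj lam).part i - 1 + chiF S i :=
  ofRows_part_lt _ _ _ _ hi

lemma nuOf_asym1 {S : Finset ℕ} (h : memL lam S) : Asym1 (nuOf lam S h) :=
  asym1_ofRows _ _ _ _

lemma nuOf_hstrip {S : Finset ℕ} (h : memL lam S) : HStrip lam (nuOf lam S h) := by
  have hf1 := h.1.1
  have hf2 := h.1.2
  have hsub := h.2.1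
  have hF1 := h.2.2.1
  have hZL := h.2.2.2
  constructor
  · -- containment
    intro i
    by_cases hi : i < dd lam
    · rw [nuOf_part_lt lam _ hi]
      have h1 := hf1 i hi
      have hpos := conj_part_pos lam hi
      by_cases hc : i ∈ S
      · rw [chiF, if_pos hc]; omega
      · have hne : lam.part i ≠ (conj lam).part i := by
          intro hcc
          exact hc (hF1 (by rw [F1, Finset.mem_filter, Finset.mem_range]; exact ⟨hi, hcc⟩))
        rw [chiF, if_neg hc]
        omega
    · rw [lam_row_count lam (by omega), nuOf, ofRows_part_ge _ _ _ _ (by omega)]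
      apply Finset.card_le_card
      intro j hj
      rw [Finset.mem_filter] at hj ⊢
      refine ⟨hj.1, ?_⟩
      have hjd : j < dd lam := Finset.mem_range.mp hj.1
      have hpos := conj_part_pos lam hjd
      have := chiF_le_one S j
      rw [rhoL]
      omega
  · -- strip condition
    intro i
    by_cases hi : i + 1 < dd lam
    · rw [nuOf_part_lt lam _ hi]
      have hfeas2 := hf2 i hi
      by_cases hc : i + 1 ∈ S
      · have hz := hZL (i + 1) hc
        have hne : (conj lam).part (i + 1) ≠ lam.part i + 1 := by
          intro hcc
          exact hz ⟨by omega, by simpa using hcc⟩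
        have hpos2 : 1 ≤ (conj lam).part (i + 1) := conj_part_pos lam (by omega)
        rw [chiF, if_pos hc]
        omega
      · rw [chiF, if_neg hc]
        have := conj_part_pos lam (by omega : i + 1 < dd lam)
        omega
    · by_cases hi2 : i + 1 = dd lam
      · have h1 : (nuOf lam S h).part (i + 1) ≤ dd lam := by
          rw [nuOf]
          exact ofRows_part_ge_le _ _ _ _ (by omega)
        have h2 : dd lam ≤ lam.part i := dd_le_part lam (by omega)
        omega
      · -- i ≥ dd lam
        have hid : dd lam ≤ i := by omega
        rw [lam_row_count lam hid, nuOf, ofRows_part_ge _ _ _ _ (by omega)]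
        apply Finset.card_le_card
        intro j hj
        rw [Finset.mem_filter] at hj ⊢
        refine ⟨hj.1, ?_⟩
        have hjd : j < dd lam := Finset.mem_range.mp hj.1
        have hpos := conj_part_pos lam hjd
        have := chiF_le_one S j
        have := hj.2
        rw [rhoL] at this
        omega

lemma nuOf_size {S : Finset ℕ} (h : memL lam S) :
    skewSize (nuOf lam S h) lam + AA lam = 2 * S.card + BB lam := by
  have hf1 := h.1.1
  have hsub := h.2.1
  have hF1 := h.2.2.1
  set d := dd lam with hd
  set N := d + (conj lam).part 0 + 2 with hN
  have hbig : ∀ j, j < d → rhoL lam S j + 1 ≤ N := by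
    intro j hj
    have h1 : (conj lam).part j ≤ (conj lam).part 0 := (conj lam).anti (Nat.zero_le j)
    have := chiF_le_one S j
    rw [rhoL]
    omega
  have hzero : ∀ i, N ≤ i → (nuOf lam S h).part i = 0 := by
    intro i hi
    have hid : d ≤ i := by omega
    rw [nuOf, ofRows_part_ge _ _ _ _ hid]
    convert Finset.card_empty
    rw [Finset.filter_eq_empty_iff]
    intro j hj
    have hjd := Finset.mem_range.mp hj
    have := hbig j hjd
    omega
  have hle : ∀ i, lam.part i ≤ (nuOf lam S h).part i := (nuOf_hstrip lam h).1
  rw [skewSize_eq _ _ hle N hzero]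
  have hsum1 : ∑ i ∈ Finset.range N, (nuOf lam S h).part i =
      ∑ j ∈ Finset.range d, (rhoL lam S j + (rhoL lam S j + 1 - d)) := by
    apply sum_part_formula _ _ _ d N
    · intro i hi
      exact nuOf_part_lt lam _ hi
    · intro i hi
      exact ofRows_part_ge _ _ _ _ hi
    · intro j hj
      have := H2L lam h j hj
      omega
    · exact hbig
    · omega
  have hsum2 : ∑ i ∈ Finset.range N, lam.part i =
      ∑ j ∈ Finset.range d, (lam.part j + ((conj lam).part j - d)) := by
    apply sum_part_formula _ _ _ d N
    · intro i _; rfl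
    · intro i hi
      exact lam_row_count lam hi
    · intro j hj
      exact dd_le_conj_part lam hj
    · intro j hj
      have h1 : (conj lam).part j ≤ (conj lam).part 0 := (conj lam).anti (Nat.zero_le j)
      omega
    · omega
  rw [hsum1, hsum2]
  have hsle : ∑ j ∈ Finset.range d, (lam.part j + ((conj lam).part j - d)) ≤
      ∑ j ∈ Finset.range d, (rhoL lam S j + (rhoL lam S j + 1 - d)) := by
    apply Finset.sum_le_sum
    intro j hj
    have hjd := Finset.mem_range.mp hj
    have h1 := hf1 j hjd
    have h2 := dd_le_conj_part lam hjd
    have h3 := chiF_le_one S j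
    by_cases hc : j ∈ S
    · rw [rhoL, chiF, if_pos hc]; omega
    · have hne : lam.part j ≠ (conj lam).part j := by
        intro hcc
        exact hc (hF1 (by rw [F1, Finset.mem_filter, Finset.mem_range]; exact ⟨hjd, hcc⟩))
      rw [rhoL, chiF, if_neg hc]
      omega
  have hsum3 : S.card = ∑ j ∈ Finset.range d, chiF S j := card_eq_sum_chiF lam S hsub
  rw [AA, BB, hsum3]
  simp only [← hd]
  have key : ∑ j ∈ Finset.range d, (rhoL lam S j + (rhoL lam S j + 1 - d)) +
      ∑ j ∈ Finset.range d, (lam.part j + 1) =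
      2 * ∑ j ∈ Finset.range d, chiF S j + ∑ j ∈ Finset.range d, (conj lam).part j +
      ∑ j ∈ Finset.range d, (lam.part j + ((conj lam).part j - d)) := by
    rw [Finset.mul_sum, ← Finset.sum_add_distrib, ← Finset.sum_add_distrib,
      ← Finset.sum_add_distrib]
    apply Finset.sum_congr rfl
    intro j hj
    have hjd := Finset.mem_range.mp hj
    have h2 := dd_le_conj_part lam hjd
    have h3 := chiF_le_one S j
    rw [rhoL]
    omega
  omega

end PerLam
end Asym1Proof
namespace Asym1Proof
open Finset Ptn PtnFacts

section ForwardL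

variable (lam : Ptn)

/-- The set of raised diagonal positions of `ν`. -/
noncomputable def SofL (ν : Ptn) : Finset ℕ :=
  (Finset.range (dd lam)).filter (fun i => ν.part i = (conj lam).part i)

variable {ν : Ptn}

lemma nu_lt (hA : Asym1 ν) (hH : HStrip lam ν) {i : ℕ} (hi : i < dd lam) : i < ν.part i :=
  lt_of_lt_of_le ((lt_dd_iff lam).mp hi) (hH.1 i)

lemma nu_conj (hA : Asym1 ν) (hH : HStrip lam ν) {i : ℕ} (hi : i < dd lam) : (conj ν).part i = ν.part i + 1 :=
  hA i (nu_lt lam hA hH hi)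

lemma nu_dd_le (hA : Asym1 ν) (hH : HStrip lam ν) : ν.part (dd lam) ≤ dd lam := by
  by_contra hc
  push_neg at hc
  have h1 : (conj ν).part (dd lam) = ν.part (dd lam) + 1 := hA (dd lam) hc
  have h2 : dd lam + 1 < (conj ν).part (dd lam) := by omega
  have h3 : dd lam < ν.part (dd lam + 1) := (lt_conj_iff ν).mp h2
  have h4 : ν.part (dd lam + 1) ≤ lam.part (dd lam) := hH.2 (dd lam)
  have h5 : lam.part (dd lam) ≤ dd lam := part_le_of_dd_le lam le_rfl
  omega

lemma conj_le_nu (hA : Asym1 ν) (hH : HStrip lam ν) {i : ℕ} (hi : i < dd lam) : (conj lam).part i ≤ ν.part i + 1 := by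
  have := conj_mono hH.1 i
  rw [nu_conj lam hA hH hi] at this
  exact this

lemma nu_le_conj (hA : Asym1 ν) (hH : HStrip lam ν) {i : ℕ} (hi : i < dd lam) : ν.part i ≤ (conj lam).part i := by
  have hlam : ¬ i < lam.part ((conj lam).part i) := by
    intro hc
    exact absurd ((lt_conj_iff lam).mpr hc) (lt_irrefl _)
  have h2 : ν.part ((conj lam).part i + 1) ≤ lam.part ((conj lam).part i) :=
    hH.2 ((conj lam).part i)
  have h3 : ¬ ((conj lam).part i + 1 < (conj ν).part i) := by
    intro hc
    have := (lt_conj_iff ν).mp hc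
    omega
  have h4 := nu_conj lam hA hH hi
  omega

lemma nu_row_count (hA : Asym1 ν) (hH : HStrip lam ν) {i : ℕ} (hi : dd lam ≤ i) :
    ν.part i = ((Finset.range (dd lam)).filter (fun j => i < ν.part j + 1)).card := by
  have h1 : {j | i < (conj ν).part j} =
      ↑((Finset.range (dd lam)).filter (fun j => i < ν.part j + 1)) := by
    ext j
    simp only [Set.mem_setOf_eq, Finset.coe_filter, Finset.mem_range]
    by_cases hj : j < dd lam
    · rw [nu_conj lam hA hH hj]
      exact ⟨fun h => ⟨hj, h⟩, fun h => h.2⟩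
    · constructor
      · intro h
        exfalso
        have h2 : dd lam < (conj ν).part j := by
          calc dd lam ≤ i := hi
            _ < (conj ν).part j := h
        have h3 : j < ν.part (dd lam) := (lt_conj_iff ν).mp h2
        have h4 := nu_dd_le lam hA hH
        omega
      · intro h
        exact absurd h.1 hj
  calc ν.part i = (conj (conj ν)).part i := (conj_conj_part ν i).symm
    _ = _ := by
      show Set.ncard _ = _
      rw [h1, Set.ncard_coe_finset]

lemma feas_of_nu (hA : Asym1 ν) (hH : HStrip lam ν) : Feas lam := by
  constructor
  · intro i hi
    have h1 := hH.1 i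
    have h2 := nu_le_conj lam hA hH hi
    omega
  · intro i hi
    have h1 := conj_le_nu lam hA hH (show i + 1 < dd lam from hi)
    have h2 := hH.2 i
    omega

lemma memL_SofL (hA : Asym1 ν) (hH : HStrip lam ν) : memL lam (SofL lam ν) := by
  refine ⟨feas_of_nu lam hA hH, Finset.filter_subset _ _, ?_, ?_⟩
  · intro i hi
    rw [F1, Finset.mem_filter, Finset.mem_range] at hi
    obtain ⟨hid, heq⟩ := hi
    rw [SofL, Finset.mem_filter, Finset.mem_range]
    refine ⟨hid, ?_⟩
    have h1 := hH.1 i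
    have h2 := nu_le_conj lam hA hH hid
    omega
  · intro i hi
    rw [SofL, Finset.mem_filter, Finset.mem_range] at hi
    rintro ⟨h1, h2⟩
    have h3 : ν.part (i - 1 + 1) ≤ lam.part (i - 1) := hH.2 (i - 1)
    rw [Nat.sub_add_cancel h1] at h3
    omega

lemma rhoL_SofL (hA : Asym1 ν) (hH : HStrip lam ν) {j : ℕ} (hj : j < dd lam) : rhoL lam (SofL lam ν) j = ν.part j := by
  have h1 := nu_le_conj lam hA hH hj
  have h2 := conj_le_nu lam hA hH hj
  have hpos := conj_part_pos lam hj
  rw [rhoL, chiF]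
  by_cases hc : ν.part j = (conj lam).part j
  · rw [if_pos (by rw [SofL, Finset.mem_filter, Finset.mem_range]; exact ⟨hj, hc⟩)]
    omega
  · rw [if_neg (by rw [SofL, Finset.mem_filter, Finset.mem_range]; exact fun h => hc h.2)]
    omega

lemma nu_eq_nuOf (hA : Asym1 ν) (hH : HStrip lam ν) : ν = nuOf lam (SofL lam ν) (memL_SofL lam hA hH) := by
  apply ptn_ext
  funext i
  by_cases hi : i < dd lam
  · rw [nuOf_part_lt lam _ hi]
    have := rhoL_SofL lam hA hH hi
    rw [rhoL] at this
    omega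
  · rw [nuOf, ofRows_part_ge _ _ _ _ (by omega), nu_row_count lam hA hH (by omega : dd lam ≤ i)]
    congr 1
    apply Finset.filter_congr
    intro j hj
    have hjd := Finset.mem_range.mp hj
    have := rhoL_SofL lam hA hH hjd
    rw [this]

/-- The L-side equivalence. -/
lemma cardL (k : ℕ) :
    Nat.card {ν : Ptn // Asym1 ν ∧ HStrip lam ν ∧ skewSize ν lam = k} =
      Nat.card {S : Finset ℕ // condL lam k S} := by
  apply Nat.card_congr
  refine ⟨fun x => ⟨SofL lam x.1, ?_⟩, fun y => ⟨nuOf lam y.1 ((condL_iff lam k y.1).mp y.2).1,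
    ?_⟩, ?_, ?_⟩
  · have hA := x.2.1
    have hH := x.2.2.1
    have hsz := x.2.2.2
    rw [condL_iff]
    refine ⟨memL_SofL lam hA hH, ?_⟩
    have h1 := nuOf_size lam (memL_SofL lam hA hH)
    rw [← nu_eq_nuOf lam hA hH] at h1
    omega
  · have hm := ((condL_iff lam k y.1).mp y.2).1
    have hsz := ((condL_iff lam k y.1).mp y.2).2
    refine ⟨nuOf_asym1 lam hm, nuOf_hstrip lam hm, ?_⟩
    have := nuOf_size lam hm
    omega
  · rintro ⟨ν, hA, hH, hsz⟩
    apply Subtype.ext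
    exact (nu_eq_nuOf lam hA hH).symm
  · rintro ⟨S, hc⟩
    apply Subtype.ext
    have hm := ((condL_iff lam k S).mp hc).1
    show SofL lam (nuOf lam S hm) = S
    ext i
    rw [SofL, Finset.mem_filter, Finset.mem_range]
    constructor
    · rintro ⟨hid, heq⟩
      rw [nuOf_part_lt lam _ hid] at heq
      have hpos := conj_part_pos lam hid
      rw [chiF] at heq
      by_cases hc2 : i ∈ S
      · exact hc2
      · rw [if_neg hc2] at heq
        omega
    · intro hiS
      have hid : i < dd lam := Finset.mem_range.mp (hm.2.1 hiS)
      refine ⟨hid, ?_⟩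
      rw [nuOf_part_lt lam _ hid, chiF, if_pos hiS]
      have hpos := conj_part_pos lam hid
      omega

end ForwardL
end Asym1Proof
namespace Asym1Proof
open Finset Ptn PtnFacts

section SideR

variable (lam : Ptn)

/-- diagonal rows of the candidate `μ` -/
noncomputable def rhoR (S : Finset ℕ) (i : ℕ) : ℕ := lam.part i - chiF S i

lemma part_ge_dd {i : ℕ} (hi : i < dd lam) : dd lam ≤ lam.part i := dd_le_part lam hi

lemma initial_le_succ (d : ℕ) (f g : ℕ → ℕ)
    (hf : ∀ a b, a ≤ b → b < d → f b ≤ f a) (hg : ∀ a b, a ≤ b → b < d → g b ≤ g a)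
    (i : ℕ)
    (hkey : ∀ j, j + 1 < d → g j ≤ i → i < f (j + 1) → False) :
    ((Finset.range d).filter (fun t => i < f t)).card ≤
      ((Finset.range d).filter (fun t => i < g t)).card + 1 := by
  have hiter1 := filter_initial d f hf i
  have hiter2 := filter_initial d g hg i
  by_contra hcon
  push_neg at hcon
  set b := ((Finset.range d).filter (fun t => i < g t)).card with hb
  have h2 : b + 1 < d ∧ i < f (b + 1) := (hiter1 (b + 1)).mp (by omega)
  have h3 : ¬ (b < d ∧ i < g b) := by
    intro hc
    have := (hiter2 b).mpr hc
    omega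
  have h4 : g b ≤ i := by
    by_contra hgi
    exact h3 ⟨by omega, by omega⟩
  exact hkey b h2.1 h4 h2.2

lemma H1R {S : Finset ℕ} (h : memR lam S) :
    ∀ i, i + 1 < dd lam → rhoR lam S (i + 1) ≤ rhoR lam S i := by
  intro i hi
  obtain ⟨⟨hf1, hf2⟩, hsub, hF1, hZR⟩ := h
  have ha : lam.part (i + 1) ≤ lam.part i := lam.anti (by omega)
  rw [rhoR, rhoR, chiF, chiF]
  by_cases hc : i ∈ S
  · rw [if_pos hc]
    by_cases hc1 : i + 1 ∈ S
    · rw [if_pos hc1]; omega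
    · -- bad case: need lam.part (i+1) < lam.part i
      rw [if_neg hc1]
      have hne1 : lam.part (i + 1) ≠ (conj lam).part (i + 1) := by
        intro hcc
        exact hc1 (hF1 (by rw [F1, Finset.mem_filter, Finset.mem_range]; exact ⟨hi, hcc⟩))
      have hfe1 : lam.part (i + 1) ≤ (conj lam).part (i + 1) := hf1 (i + 1) hi
      have hfe2 : (conj lam).part (i + 1) ≤ lam.part i + 1 := hf2 i hi
      have hzr : ¬ ((conj lam).part (i + 1) = lam.part i + 1) := hZR i hc
      have := part_ge_dd lam (show i < dd lam by omega)
      omega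
  · rw [if_neg hc]
    have := chiF_le_one S (i + 1)
    have := part_ge_dd lam (show i + 1 < dd lam from hi)
    split_ifs <;> omega

lemma H2R {S : Finset ℕ} (h : memR lam S) :
    ∀ i, i < dd lam → dd lam - 1 ≤ rhoR lam S i := by
  intro i hi
  have := part_ge_dd lam hi
  have := chiF_le_one S i
  rw [rhoR]
  omega

/-- The candidate partition `μ ⊆ lam`. -/
noncomputable def muOf (S : Finset ℕ) (h : memR lam S) : Ptn :=
  ofRows (dd lam) (rhoR lam S) (H1R lam h) (H2R lam h)

lemma muOf_part_lt {S : Finset ℕ} (h : memR lam S) {i : ℕ} (hi : i < dd lam) :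
    (muOf lam S h).part i = lam.part i - chiF S i :=
  ofRows_part_lt _ _ _ _ hi

lemma muOf_asym1 {S : Finset ℕ} (h : memR lam S) : Asym1 (muOf lam S h) :=
  asym1_ofRows _ _ _ _

lemma rhoR_succ_le_conj {S : Finset ℕ} (h : memR lam S) {j : ℕ} (hj : j < dd lam) :
    rhoR lam S j + 1 ≤ (conj lam).part j := by
  have hf1 := h.1.1
  have hF1 := h.2.2.1
  rw [rhoR]
  by_cases hc : j ∈ S
  · rw [chiF, if_pos hc]
    have := hf1 j hj
    have := part_ge_dd lam hj
    omega
  · have hne : lam.part j ≠ (conj lam).part j := by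
      intro hcc
      exact hc (hF1 (by rw [F1, Finset.mem_filter, Finset.mem_range]; exact ⟨hj, hcc⟩))
    rw [chiF, if_neg hc]
    have := hf1 j hj
    omega

lemma muOf_vstrip {S : Finset ℕ} (h : memR lam S) : VStrip (muOf lam S h) lam := by
  have hf1 := h.1.1
  have hf2 := h.1.2
  have hsub := h.2.1
  have hF1 := h.2.2.1
  have hZR := h.2.2.2
  constructor
  · -- μ ⊆ lam
    intro i
    by_cases hi : i < dd lam
    · rw [muOf_part_lt lam h hi]
      omega
    · rw [lam_row_count lam (by omega), muOf, ofRows_part_ge _ _ _ _ (by omega)]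
      apply Finset.card_le_card
      intro j hj
      rw [Finset.mem_filter] at hj ⊢
      refine ⟨hj.1, ?_⟩
      have hjd : j < dd lam := Finset.mem_range.mp hj.1
      have := rhoR_succ_le_conj lam h hjd
      omega
  · -- lam.part i ≤ μ_i + 1
    intro i
    by_cases hi : i < dd lam
    · rw [muOf_part_lt lam h hi]
      have := chiF_le_one S i
      have := part_ge_dd lam hi
      omega
    · rw [lam_row_count lam (by omega), muOf, ofRows_part_ge _ _ _ _ (by omega)]
      have hles := initial_le_succ (dd lam) (conj lam).part (fun t => rhoR lam S t + 1)
        (fun a b hab _ => (conj lam).anti hab)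
        (fun a b hab hbd => by
          have := rho_mono (dd lam) (rhoR lam S) (H1R lam h) a b hab hbd
          show rhoR lam S b + 1 ≤ rhoR lam S a + 1
          omega)
        i ?_
      · omega
      · intro j hj1 hj2 hj3
        have hj2' : rhoR lam S j + 1 ≤ i := hj2
        have hfe2 : (conj lam).part (j + 1) ≤ lam.part j + 1 := hf2 j hj1
        have hchi : j ∈ S := by
          by_contra hcs
          have : rhoR lam S j = lam.part j := by
            rw [rhoR, chiF, if_neg hcs]
            omega
          omega
        have hzr := hZR j hchi
        have : rhoR lam S j = lam.part j - 1 := by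
          rw [rhoR, chiF, if_pos hchi]
        have := part_ge_dd lam (show j < dd lam by omega)
        omega

lemma muOf_size {S : Finset ℕ} (h : memR lam S) :
    skewSize lam (muOf lam S h) + AA lam = 2 * S.card + BB lam := by
  have hf1 := h.1.1
  have hsub := h.2.1
  set d := dd lam with hd
  set N := d + lam.part 0 + (conj lam).part 0 + 2 with hN
  have hbig : ∀ j, j < d → rhoR lam S j + 1 ≤ N := by
    intro j hj
    have h1 : lam.part j ≤ lam.part 0 := lam.anti (Nat.zero_le j)
    rw [rhoR]
    omega
  have hbig2 : ∀ j, j < d → (conj lam).part j ≤ N := by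
    intro j hj
    have h1 : (conj lam).part j ≤ (conj lam).part 0 := (conj lam).anti (Nat.zero_le j)
    omega
  have hzero : ∀ i, N ≤ i → lam.part i = 0 := by
    intro i hi
    rw [lam_row_count lam (by omega)]
    convert Finset.card_empty
    rw [Finset.filter_eq_empty_iff]
    intro j hj
    have hjd := Finset.mem_range.mp hj
    have := hbig2 j hjd
    omega
  have hle : ∀ i, (muOf lam S h).part i ≤ lam.part i := (muOf_vstrip lam h).1
  rw [skewSize_eq _ _ hle N hzero]
  have hsum2 : ∑ i ∈ Finset.range N, lam.part i =
      ∑ j ∈ Finset.range d, (lam.part j + ((conj lam).part j - d)) := by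
    apply sum_part_formula _ _ _ d N
    · intro i _; rfl
    · intro i hi
      exact lam_row_count lam hi
    · intro j hj
      exact dd_le_conj_part lam hj
    · exact hbig2
    · omega
  have hsum1 : ∑ i ∈ Finset.range N, (muOf lam S h).part i =
      ∑ j ∈ Finset.range d, (rhoR lam S j + (rhoR lam S j + 1 - d)) := by
    apply sum_part_formula _ _ _ d N
    · intro i hi
      exact muOf_part_lt lam h hi
    · intro i hi
      exact ofRows_part_ge _ _ _ _ hi
    · intro j hj
      have := H2R lam h j hj
      omega
    · exact hbig
    · omega
  rw [hsum1, hsum2]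
  have hsle : ∑ j ∈ Finset.range d, (rhoR lam S j + (rhoR lam S j + 1 - d)) ≤
      ∑ j ∈ Finset.range d, (lam.part j + ((conj lam).part j - d)) := by
    apply Finset.sum_le_sum
    intro j hj
    have hjd := Finset.mem_range.mp hj
    have h1 : lam.part j ≤ (conj lam).part j := hf1 j hjd
    have h2 : d ≤ lam.part j := part_ge_dd lam hjd
    have h2' : d ≤ (conj lam).part j := dd_le_conj_part lam hjd
    have h3 := chiF_le_one S j
    by_cases hc : j ∈ S
    · rw [rhoR, chiF, if_pos hc]
      omega
    · have hne : lam.part j ≠ (conj lam).part j := by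
        intro hcc
        exact hc (h.2.2.1 (by rw [F1, Finset.mem_filter, Finset.mem_range]; exact ⟨hjd, hcc⟩))
      rw [rhoR, chiF, if_neg hc]
      omega
  have hsum3 : S.card = ∑ j ∈ Finset.range d, chiF S j := card_eq_sum_chiF lam S hsub
  rw [AA, BB, hsum3]
  simp only [← hd]
  have key : ∑ j ∈ Finset.range d, (lam.part j + ((conj lam).part j - d)) +
      ∑ j ∈ Finset.range d, (lam.part j + 1) =
      2 * ∑ j ∈ Finset.range d, chiF S j + ∑ j ∈ Finset.range d, (conj lam).part j +
      ∑ j ∈ Finset.range d, (rhoR lam S j + (rhoR lam S j + 1 - d)) := by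
    rw [Finset.mul_sum, ← Finset.sum_add_distrib, ← Finset.sum_add_distrib,
      ← Finset.sum_add_distrib]
    apply Finset.sum_congr rfl
    intro j hj
    have hjd := Finset.mem_range.mp hj
    have h1 : lam.part j ≤ (conj lam).part j := hf1 j hjd
    have h2 : d ≤ lam.part j := part_ge_dd lam hjd
    have h2' : d ≤ (conj lam).part j := dd_le_conj_part lam hjd
    have h3 := chiF_le_one S j
    rw [rhoR]
    omega
  omega

end SideR
end Asym1Proof
namespace Asym1Proof
open Finset Ptn PtnFacts

section ForwardR

variable (lam : Ptn) {μ : Ptn}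

/-- The set of lowered diagonal positions of `μ`. -/
noncomputable def SofR (μ : Ptn) : Finset ℕ :=
  (Finset.range (dd lam)).filter (fun i => μ.part i + 1 = lam.part i)

lemma mu_cases (hV : VStrip μ lam) (i : ℕ) :
    μ.part i = lam.part i ∨ μ.part i + 1 = lam.part i := by
  have h1 := hV.1 i
  have h2 := hV.2 i
  omega

lemma mu_col_lower (hV : VStrip μ lam) {i : ℕ} (hi : i + 1 < dd lam) :
    (conj lam).part (i + 1) ≤ (conj μ).part i := by
  have hpos : 1 ≤ (conj lam).part (i + 1) := conj_part_pos lam hi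
  have hr : (conj lam).part (i + 1) - 1 < (conj lam).part (i + 1) := by omega
  have h1 : (i + 1) < lam.part ((conj lam).part (i + 1) - 1) := (lt_conj_iff lam).mp hr
  have h2 : lam.part ((conj lam).part (i + 1) - 1) ≤
      μ.part ((conj lam).part (i + 1) - 1) + 1 := hV.2 _
  have h3 : i < μ.part ((conj lam).part (i + 1) - 1) := by omega
  have h4 : (conj lam).part (i + 1) - 1 < (conj μ).part i := (lt_conj_iff μ).mpr h3
  omega

lemma mu_lt_of_lt (hV : VStrip μ lam) {i : ℕ} (hi : i + 1 < dd lam) : i < μ.part i := by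
  have h1 : lam.part (i + 1) ≤ μ.part (i + 1) + 1 := hV.2 (i + 1)
  have h2 : μ.part (i + 1) ≤ μ.part i := μ.anti (by omega)
  have h3 : dd lam ≤ lam.part (i + 1) := dd_le_part lam hi
  omega

lemma feasR (hA : Asym1 μ) (hV : VStrip μ lam) : Feas lam := by
  constructor
  · intro i hi
    have hmono := conj_mono hV.1 i
    rcases mu_cases lam hV i with h | h
    · have hlt : i < μ.part i := by
        have := (lt_dd_iff lam).mp hi
        omega
      have := hA i hlt
      omega
    · by_cases hlt : i < μ.part i
      · have := hA i hlt
        omega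
      · -- μ_i = i, l i = i + 1, forced l i = dd lam
        have h2 := hV.2 i
        have h3 := dd_le_part lam hi
        have h4 := dd_le_conj_part lam hi
        omega
  · intro i hi
    have h1 := mu_col_lower lam hV hi
    have h2 : i < μ.part i := mu_lt_of_lt lam hV hi
    have h3 := hA i h2
    have h4 := hV.1 i
    omega

lemma memR_SofR (hA : Asym1 μ) (hV : VStrip μ lam) : memR lam (SofR lam μ) := by
  refine ⟨feasR lam hA hV, Finset.filter_subset _ _, ?_, ?_⟩
  · intro i hi
    rw [F1, Finset.mem_filter, Finset.mem_range] at hi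
    obtain ⟨hid, heq⟩ := hi
    rw [SofR, Finset.mem_filter, Finset.mem_range]
    refine ⟨hid, ?_⟩
    rcases mu_cases lam hV i with h | h
    · exfalso
      have hlt : i < μ.part i := by
        have := (lt_dd_iff lam).mp hid
        omega
      have h2 := hA i hlt
      have hmono := conj_mono hV.1 i
      omega
    · exact h
  · intro i hi hz
    rw [SofR, Finset.mem_filter, Finset.mem_range] at hi
    obtain ⟨hid, heq⟩ := hi
    by_cases hi1 : i + 1 < dd lam
    · have h1 := mu_col_lower lam hV hi1
      have h2 : i < μ.part i := mu_lt_of_lt lam hV hi1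
      have h3 := hA i h2
      omega
    · -- i + 1 = dd lam
      have h4 : (conj lam).part (dd lam) ≤ dd lam := conj_part_le_of_dd_le lam le_rfl
      have h5 : dd lam ≤ lam.part i := dd_le_part lam hid
      have h6 : i + 1 = dd lam := by omega
      rw [h6] at hz
      omega

lemma mu_row_count (hA : Asym1 μ) (hV : VStrip μ lam) {i : ℕ} (hi : dd lam ≤ i) :
    μ.part i = ((Finset.range (dd lam)).filter (fun j => i < μ.part j + 1)).card := by
  have h1 : {j | i < (conj μ).part j} =
      ↑((Finset.range (dd lam)).filter (fun j => i < μ.part j + 1)) := by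
    ext j
    simp only [Set.mem_setOf_eq, Finset.coe_filter, Finset.mem_range]
    by_cases hj : j < dd lam
    · by_cases hlt : j < μ.part j
      · rw [hA j hlt]
        exact ⟨fun h => ⟨hj, h⟩, fun h => h.2⟩
      · constructor
        · intro h
          exfalso
          have h2 : j < μ.part i := (lt_conj_iff μ).mp h
          have h3 : μ.part i ≤ μ.part j := μ.anti (by omega)
          omega
        · rintro ⟨-, h⟩
          omega
    · constructor
      · intro h
        exfalso
        have h2 : dd lam < (conj μ).part j := by omega
        have h3 : j < μ.part (dd lam) := (lt_conj_iff μ).mp h2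
        have h4 : μ.part (dd lam) ≤ lam.part (dd lam) := hV.1 _
        have h5 : lam.part (dd lam) ≤ dd lam := part_le_of_dd_le lam le_rfl
        omega
      · intro h
        exact absurd h.1 hj
  calc μ.part i = (conj (conj μ)).part i := (conj_conj_part μ i).symm
    _ = _ := by
      show Set.ncard _ = _
      rw [h1, Set.ncard_coe_finset]

lemma rhoR_SofR (hV : VStrip μ lam) {j : ℕ} (hj : j < dd lam) :
    rhoR lam (SofR lam μ) j = μ.part j := by
  rw [rhoR, chiF]
  by_cases hc : μ.part j + 1 = lam.part j
  · rw [if_pos (by rw [SofR, Finset.mem_filter, Finset.mem_range]; exact ⟨hj, hc⟩)]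
    omega
  · rw [if_neg (by rw [SofR, Finset.mem_filter, Finset.mem_range]; exact fun h => hc h.2)]
    rcases mu_cases lam hV j with h | h
    · omega
    · omega

lemma mu_eq_muOf (hA : Asym1 μ) (hV : VStrip μ lam) :
    μ = muOf lam (SofR lam μ) (memR_SofR lam hA hV) := by
  apply ptn_ext
  funext i
  by_cases hi : i < dd lam
  · rw [muOf_part_lt lam _ hi]
    have h1 := rhoR_SofR lam hV hi
    rw [rhoR] at h1
    omega
  · rw [muOf, ofRows_part_ge _ _ _ _ (by omega), mu_row_count lam hA hV (by omega : dd lam ≤ i)]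
    congr 1
    apply Finset.filter_congr
    intro j hj
    have hjd := Finset.mem_range.mp hj
    have := rhoR_SofR lam hV hjd
    rw [this]

/-- The R-side equivalence. -/
lemma cardR (k : ℕ) :
    Nat.card {mu : Ptn // Asym1 mu ∧ VStrip mu lam ∧ skewSize lam mu = k} =
      Nat.card {S : Finset ℕ // condR lam k S} := by
  apply Nat.card_congr
  refine ⟨fun x => ⟨SofR lam x.1, ?_⟩, fun y => ⟨muOf lam y.1 ((condR_iff lam k y.1).mp y.2).1,
    ?_⟩, ?_, ?_⟩
  · have hA := x.2.1
    have hV := x.2.2.1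
    have hsz := x.2.2.2
    rw [condR_iff]
    refine ⟨memR_SofR lam hA hV, ?_⟩
    have h1 := muOf_size lam (memR_SofR lam hA hV)
    rw [← mu_eq_muOf lam hA hV] at h1
    omega
  · have hm := ((condR_iff lam k y.1).mp y.2).1
    have hsz := ((condR_iff lam k y.1).mp y.2).2
    refine ⟨muOf_asym1 lam hm, muOf_vstrip lam hm, ?_⟩
    have := muOf_size lam hm
    omega
  · rintro ⟨μ, hA, hV, hsz⟩
    apply Subtype.ext
    exact (mu_eq_muOf lam hA hV).symm
  · rintro ⟨S, hc⟩
    apply Subtype.ext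
    have hm := ((condR_iff lam k S).mp hc).1
    show SofR lam (muOf lam S hm) = S
    ext i
    rw [SofR, Finset.mem_filter, Finset.mem_range]
    constructor
    · rintro ⟨hid, heq⟩
      rw [muOf_part_lt lam _ hid] at heq
      have hge := part_ge_dd lam hid
      rw [chiF] at heq
      by_cases hc2 : i ∈ S
      · exact hc2
      · rw [if_neg hc2] at heq
        omega
    · intro hiS
      have hid : i < dd lam := Finset.mem_range.mp (hm.2.1 hiS)
      refine ⟨hid, ?_⟩
      rw [muOf_part_lt lam _ hid, chiF, if_pos hiS]
      have hge := part_ge_dd lam hid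
      omega

end ForwardR
end Asym1Proof

open Ptn in
/-- For every partition `lam` and `k ≥ 0`, the number of `1`-asymmetric
partitions `ν` with `lam ≺ ν` and `|ν/lam| = k` equals the number of
`1`-asymmetric partitions `μ` with `μ ≺' lam` and `|lam/μ| = k`. -/
theorem projection_one_asymmetric (lam : Ptn) (k : ℕ) :
    Nat.card {ν : Ptn // Asym1 ν ∧ HStrip lam ν ∧ skewSize ν lam = k} =
      Nat.card {mu : Ptn // Asym1 mu ∧ VStrip mu lam ∧ skewSize lam mu = k} := by
  rw [Asym1Proof.cardL lam k, Asym1Proof.mid_card_eq lam k, ← Asym1Proof.cardR lam k]
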